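/- If a quartet tree q = ij|kh distinguishes an interior edge e of a binary tree T, with i,j,k,h lying in the four partition classes A_i, A_j, A_k, A_h induced by e, then for any leaf x not in the support of q, the quartet tree substitution q(x), obtained by replacing with x the unique element of supp(q) lying in the same partition class as x, also distinguishes the edge e. -/

import Mathlib

open SimpleGraph Finset

/-- An unrooted binary tree: a tree in which every vertex has degree 1 or 3. -/
def IsBinaryTree {V : Type} [Fintype V] [DecidableEq V]
    (G : SimpleGraph V) [DecidableRel G.Adj] : Prop :=
  G.IsTree ∧ ∀ v, G.degree v = 1 ∨ G.degree v = 3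

/-- A leaf is a vertex of degree one. -/
def IsLeaf {V : Type} [Fintype V] [DecidableEq V]
    (G : SimpleGraph V) [DecidableRel G.Adj] (v : V) : Prop := G.degree v = 1

/-- An interior edge is an edge both of whose endpoints have degree 3. -/
def InteriorEdge {V : Type} [Fintype V] [DecidableEq V]
    (G : SimpleGraph V) [DecidableRel G.Adj] (e : Sym2 V) : Prop :=
  e ∈ G.edgeSet ∧ ∀ v ∈ e, G.degree v = 3

/-- The edge `e` separates `a,b` from `c,d`: after deleting `e`, `a` and `b` lie in one
connected component and `c` and `d` lie in the other. -/
def Separates {V : Type} (G : SimpleGraph V) (e : Sym2 V) (a b c d : V) : Prop :=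
  e ∈ G.edgeSet ∧ (G.deleteEdges {e}).Reachable a b ∧
    (G.deleteEdges {e}).Reachable c d ∧ ¬ (G.deleteEdges {e}).Reachable a c

/-- The quartet tree `ab|cd` distinguishes `e` if `e` is the unique edge separating
`{a,b}` from `{c,d}`. -/
def Distinguishes {V : Type} (G : SimpleGraph V) (e : Sym2 V) (a b c d : V) : Prop :=
  Separates G e a b c d ∧ ∀ e', Separates G e' a b c d → e' = e

/-- `x` and `y` lie in the same class of the four-way partition induced by the interior
edge with endpoints `u`, `v`: they are connected after removing all edges incident
to `u` or `v`. -/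
def SameClass {V : Type} (G : SimpleGraph V) (u v x y : V) : Prop :=
  (G.deleteEdges (G.incidenceSet u ∪ G.incidenceSet v)).Reachable x y

/-- A quartet tree `ab|cd`, recorded as the ordered data of its two pairs `{a,b}`, `{c,d}`. -/
structure Q4 (V : Type) where
  a : V
  b : V
  c : V
  d : V

/-- The support of a quartet tree. -/
def Q4.supp {V : Type} [DecidableEq V] (q : Q4 V) : Finset V := {q.a, q.b, q.c, q.d}

/-- The quartet tree as an unordered pair of unordered pairs (its topology `ab|cd`). -/
def Q4.toSym {V : Type} (q : Q4 V) : Sym2 (Sym2 V) := s(s(q.a, q.b), s(q.c, q.d))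

open Classical in
/-- Quartet tree substitution: replace by `x` the element of the support of `q`
lying in the same class as `x` of the four-way partition induced by the edge `s(u,v)`. -/
noncomputable def subst {V : Type} (G : SimpleGraph V) (u v : V) (q : Q4 V) (x : V) : Q4 V :=
  if SameClass G u v x q.a then ⟨x, q.b, q.c, q.d⟩
  else if SameClass G u v x q.b then ⟨q.a, x, q.c, q.d⟩
  else if SameClass G u v x q.c then ⟨q.a, q.b, x, q.d⟩
  else ⟨q.a, q.b, q.c, x⟩

namespace QuartetAux

variable {V : Type}

open SimpleGraph Walk

lemma reach_transfer {G : SimpleGraph V} {s t : Set (Sym2 V)} {a b : V}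
    (p : (G.deleteEdges s).Walk a b) (hp : ∀ f ∈ p.edges, f ∉ t) :
    (G.deleteEdges t).Reachable a b := by
  refine ⟨p.transfer _ fun f hf => ?_⟩
  rw [edgeSet_deleteEdges]
  have hfG : f ∈ (G.deleteEdges s).edgeSet := p.edges_subset_edgeSet hf
  rw [edgeSet_deleteEdges] at hfG
  exact ⟨hfG.1, hp f hf⟩

lemma support_reach [DecidableEq V] {G : SimpleGraph V} {a b w : V} (p : G.Walk a b)
    (hw : w ∈ p.support) : G.Reachable a w := ⟨p.takeUntil w hw⟩

lemma mem_support_of_mem_edge {G : SimpleGraph V} {a b w : V} {f : Sym2 V} (p : G.Walk a b)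
    (hf : f ∈ p.edges) (hw : w ∈ f) : w ∈ p.support := by
  induction f using Sym2.ind with
  | _ x y =>
    rcases Sym2.mem_iff.mp hw with rfl | rfl
    · exact p.fst_mem_support_of_mem_edges hf
    · exact p.snd_mem_support_of_mem_edges hf

lemma reach_delete_avoid2 [DecidableEq V] {G : SimpleGraph V} {s t : Set (Sym2 V)} {a b w w' : V}
    (h : (G.deleteEdges s).Reachable a b) (hw : ¬ (G.deleteEdges s).Reachable a w)
    (hw' : ¬ (G.deleteEdges s).Reachable a w')
    (ht : ∀ f ∈ t, w ∈ f ∨ w' ∈ f) : (G.deleteEdges t).Reachable a b := by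
  obtain ⟨p⟩ := h
  refine reach_transfer p fun f hf hft => ?_
  rcases ht f hft with hm | hm
  · exact hw (support_reach p (mem_support_of_mem_edge p hf hm))
  · exact hw' (support_reach p (mem_support_of_mem_edge p hf hm))

lemma reach_delete_avoid [DecidableEq V] {G : SimpleGraph V} {s t : Set (Sym2 V)} {a b w : V}
    (h : (G.deleteEdges s).Reachable a b) (hw : ¬ (G.deleteEdges s).Reachable a w)
    (ht : ∀ f ∈ t, w ∈ f) : (G.deleteEdges t).Reachable a b :=
  reach_delete_avoid2 h hw hw (fun f hf => Or.inl (ht f hf))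

lemma cross_vertex [DecidableEq V] {G : SimpleGraph V} {s : Set (Sym2 V)} {e : Sym2 V}
    {a b u : V} (hu : u ∈ e) (h : (G.deleteEdges s).Reachable a b)
    (h2 : ¬ (G.deleteEdges {e}).Reachable a b) :
    (G.deleteEdges s).Reachable a u := by
  obtain ⟨p⟩ := h
  by_cases hmem : e ∈ p.edges
  · exact support_reach p (mem_support_of_mem_edge p hmem hu)
  · refine absurd (reach_transfer p fun f hf hfe => ?_) h2
    rw [Set.mem_singleton_iff] at hfe
    exact hmem (hfe ▸ hf)

lemma twoSidesGen {G : SimpleGraph V} (p q : V) : ∀ {w z : V} (_ : G.Walk w z),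
    (G.deleteEdges {s(p, q)}).Reachable w z ∨
    ((G.deleteEdges {s(p, q)}).Reachable w p ∧ (G.deleteEdges {s(p, q)}).Reachable z q) ∨
    ((G.deleteEdges {s(p, q)}).Reachable w q ∧ (G.deleteEdges {s(p, q)}).Reachable z p) := by
  intro w z W
  induction W with
  | nil => exact Or.inl (Reachable.refl _)
  | @cons a c z hadj W ih =>
    by_cases hE : s(a, c) = s(p, q)
    · rcases Sym2.eq_iff.mp hE with ⟨rfl, rfl⟩ | ⟨rfl, rfl⟩
      · rcases ih with h1 | ⟨h1, h2⟩ | ⟨h1, h2⟩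
        · exact Or.inr (Or.inl ⟨Reachable.refl _, h1.symm⟩)
        · exact Or.inl (h1.symm.trans h2.symm)
        · exact Or.inl h2.symm
      · rcases ih with h1 | ⟨h1, h2⟩ | ⟨h1, h2⟩
        · exact Or.inr (Or.inr ⟨Reachable.refl _, h1.symm⟩)
        · exact Or.inl h2.symm
        · exact Or.inl (h1.symm.trans h2.symm)
    · have hadj' : (G.deleteEdges {s(p, q)}).Adj a c := by
        rw [deleteEdges_adj]
        exact ⟨hadj, by simpa using hE⟩
      rcases ih with h1 | ⟨h1, h2⟩ | ⟨h1, h2⟩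
      · exact Or.inl (hadj'.reachable.trans h1)
      · exact Or.inr (Or.inl ⟨hadj'.reachable.trans h1, h2⟩)
      · exact Or.inr (Or.inr ⟨hadj'.reachable.trans h1, h2⟩)

lemma twoSides {G : SimpleGraph V} {p q w : V} (W : G.Walk w p) :
    (G.deleteEdges {s(p, q)}).Reachable w p ∨ (G.deleteEdges {s(p, q)}).Reachable w q := by
  rcases twoSidesGen p q W with h1 | ⟨h1, h2⟩ | ⟨h1, h2⟩
  · exact Or.inl h1
  · exact Or.inl h1
  · exact Or.inr h1

lemma twoComp {G : SimpleGraph V} (hpre : G.Preconnected) {e : Sym2 V} {a b : V}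
    (hab : ¬ (G.deleteEdges {e}).Reachable a b) (z : V) :
    (G.deleteEdges {e}).Reachable z a ∨ (G.deleteEdges {e}).Reachable z b := by
  induction e using Sym2.ind with
  | _ p q =>
    obtain ⟨Wa⟩ := hpre a p
    obtain ⟨Wb⟩ := hpre b p
    obtain ⟨Wz⟩ := hpre z p
    rcases twoSides (q := q) Wa with ha | ha <;>
      rcases twoSides (q := q) Wb with hb | hb <;>
        rcases twoSides (q := q) Wz with hz | hz
    · exact absurd (ha.trans hb.symm) hab
    · exact absurd (ha.trans hb.symm) hab
    · exact Or.inl (hz.trans ha.symm)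
    · exact Or.inr (hz.trans hb.symm)
    · exact Or.inr (hz.trans hb.symm)
    · exact Or.inl (hz.trans ha.symm)
    · exact absurd (ha.trans hb.symm) hab
    · exact absurd (ha.trans hb.symm) hab

lemma aux1 [DecidableEq V] {G : SimpleGraph V} (htree : G.IsTree)
    {u v i j k h : V} (hd : Distinguishes G s(u, v) i j k h)
    (hiu : (G.deleteEdges {s(u, v)}).Reachable i u) (hne : i ≠ u)
    (hsc : (G.deleteEdges (G.incidenceSet u ∪ G.incidenceSet v)).Reachable i j) : False := by
  obtain ⟨⟨heE, _Rij, Rkh, nRik⟩, huniq⟩ := hd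
  have hadjuv : G.Adj u v := G.mem_edgeSet.mp heE
  have nRkU : ¬ (G.deleteEdges {s(u, v)}).Reachable k u := fun hh => nRik (hiu.trans hh.symm)
  obtain ⟨Wk⟩ := htree.isConnected.preconnected k u
  have hkv : (G.deleteEdges {s(u, v)}).Reachable k v :=
    (twoSides (q := v) Wk).resolve_left nRkU
  obtain ⟨p0⟩ := hiu.symm
  obtain ⟨p, hp⟩ := p0.toPath
  cases p with
  | nil => exact hne rfl
  | @cons _ c _ hadj q =>
    rw [Walk.cons_isPath_iff] at hp
    have hGadj : G.Adj u c ∧ s(u, c) ∉ ({s(u, v)} : Set (Sym2 V)) := deleteEdges_adj.mp hadj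
    have he0ne : s(u, c) ≠ s(u, v) := by simpa using hGadj.2
    have he0E : s(u, c) ∈ G.edgeSet := G.mem_edgeSet.mpr hGadj.1
    have hsep : Separates G s(u, c) i j k h := by
      refine ⟨he0E, ?_, ?_, ?_⟩
      · refine Reachable.mono (deleteEdges_anti ?_) hsc
        intro f hf
        rw [Set.mem_singleton_iff] at hf
        subst hf
        exact Or.inl ⟨he0E, Sym2.mem_mk_left _ _⟩
      · exact reach_delete_avoid Rkh nRkU
          (fun f hf => by rw [Set.mem_singleton_iff] at hf; subst hf; exact Sym2.mem_mk_left _ _)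
      · intro hik
        have Ric : (G.deleteEdges {s(u, c)}).Reachable c i := by
          refine reach_transfer q fun f hf hft => ?_
          rw [Set.mem_singleton_iff] at hft
          subst hft
          exact hp.2 (mem_support_of_mem_edge q hf (Sym2.mem_mk_left _ _))
        have Rkv' : (G.deleteEdges {s(u, c)}).Reachable k v := reach_delete_avoid hkv nRkU
          (fun f hf => by rw [Set.mem_singleton_iff] at hf; subst hf; exact Sym2.mem_mk_left _ _)
        have Radj' : (G.deleteEdges {s(u, c)}).Adj u v := by
          rw [deleteEdges_adj]
          refine ⟨hadjuv, ?_⟩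
          rw [Set.mem_singleton_iff]
          exact fun hh => he0ne hh.symm
        have hre : (G.deleteEdges {s(u, c)}).Reachable u c :=
          ((Radj'.reachable.trans Rkv'.symm).trans (hik.symm.trans Ric.symm)).symm.symm
        have hbridge : G.IsBridge s(u, c) :=
          isAcyclic_iff_forall_edge_isBridge.mp htree.IsAcyclic he0E
        exact (isBridge_iff.mp hbridge) hre
    exact he0ne (huniq _ hsep)

lemma notSameClass [DecidableEq V] {G : SimpleGraph V} (htree : G.IsTree)
    {u v i j k h : V} (hd : Distinguishes G s(u, v) i j k h) (hiu : i ≠ u) (hiv : i ≠ v) :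
    ¬ SameClass G u v i j := by
  intro hsc
  obtain ⟨Wi⟩ := htree.isConnected.preconnected i u
  rcases twoSides (q := v) Wi with hiuR | hivR
  · exact aux1 htree hd hiuR hiu hsc
  · have hd' : Distinguishes G s(v, u) i j k h := by rwa [Sym2.eq_swap]
    have hsc' : (G.deleteEdges (G.incidenceSet v ∪ G.incidenceSet u)).Reachable i j := by
      rwa [Set.union_comm]
    have hivR' : (G.deleteEdges {s(v, u)}).Reachable i v := by rwa [Sym2.eq_swap]
    exact aux1 htree hd' hivR' hiv hsc'

lemma main [DecidableEq V] {G : SimpleGraph V} (htree : G.IsTree)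
    {u v i j k h x : V} (hd : Distinguishes G s(u, v) i j k h) (hiu : i ≠ u) (hiv : i ≠ v)
    (hsc : SameClass G u v x i) : Distinguishes G s(u, v) x j k h := by
  have heE : s(u, v) ∈ G.edgeSet := hd.1.1
  have hKH : G.deleteEdges (G.incidenceSet u ∪ G.incidenceSet v) ≤ G.deleteEdges {s(u, v)} := by
    refine deleteEdges_anti ?_
    intro f hf
    rw [Set.mem_singleton_iff] at hf
    subst hf
    exact Or.inl ⟨heE, Sym2.mem_mk_left _ _⟩
  have hxi : (G.deleteEdges {s(u, v)}).Reachable x i := Reachable.mono hKH hsc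
  obtain ⟨⟨_, Rij, Rkh, nRik⟩, huniq⟩ := id hd
  refine ⟨⟨heE, hxi.trans Rij, Rkh, fun hxk => nRik (hxi.symm.trans hxk)⟩, ?_⟩
  rintro e' ⟨he', Rxj', Rkh', nRxk'⟩
  rcases twoComp htree.isConnected.preconnected nRxk' i with hix' | hik'
  · exact huniq e' ⟨he', hix'.trans Rxj', Rkh', fun hikk => nRxk' (hix'.symm.trans hikk)⟩
  · exfalso
    have hiu' : (G.deleteEdges {e'}).Reachable i u :=
      cross_vertex (Sym2.mem_mk_left u v) hik' nRik
    have hiv' : (G.deleteEdges {e'}).Reachable i v :=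
      cross_vertex (Sym2.mem_mk_right u v) hik' nRik
    have nRxu' : ¬ (G.deleteEdges {e'}).Reachable x u :=
      fun hh => nRxk' ((hh.trans hiu'.symm).trans hik')
    have nRxv' : ¬ (G.deleteEdges {e'}).Reachable x v :=
      fun hh => nRxk' ((hh.trans hiv'.symm).trans hik')
    have hscxj : SameClass G u v x j := by
      refine reach_delete_avoid2 Rxj' nRxu' nRxv' ?_
      rintro f (hf | hf)
      · exact Or.inl hf.2
      · exact Or.inr hf.2
    exact notSameClass htree hd hiu hiv (hsc.symm.trans hscxj)

lemma sep_swap12 {G : SimpleGraph V} {e : Sym2 V} {a b c d : V}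
    (h : Separates G e a b c d) : Separates G e b a c d :=
  ⟨h.1, h.2.1.symm, h.2.2.1, fun hbc => h.2.2.2 (h.2.1.trans hbc)⟩

lemma sep_pairs {G : SimpleGraph V} {e : Sym2 V} {a b c d : V}
    (h : Separates G e a b c d) : Separates G e c d a b :=
  ⟨h.1, h.2.2.1, h.2.1, fun hca => h.2.2.2 hca.symm⟩

lemma dist_swap12 {G : SimpleGraph V} {e : Sym2 V} {a b c d : V}
    (h : Distinguishes G e a b c d) : Distinguishes G e b a c d :=
  ⟨sep_swap12 h.1, fun e' hs' => h.2 e' (sep_swap12 hs')⟩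

lemma dist_pairs {G : SimpleGraph V} {e : Sym2 V} {a b c d : V}
    (h : Distinguishes G e a b c d) : Distinguishes G e c d a b :=
  ⟨sep_pairs h.1, fun e' hs' => h.2 e' (sep_pairs hs')⟩

end QuartetAux

/-- If `q = ij|kh` distinguishes the interior edge `e = s(u,v)` and `x` is a leaf outside
`supp(q)`, then the quartet tree substitution `q(x)`, obtained by replacing with `x` the
element of `supp(q)` lying in the same partition class as `x`, also distinguishes `e`. -/
theorem stmt_7 {V : Type} [Fintype V] [DecidableEq V] (G : SimpleGraph V) [DecidableRel G.Adj]
    (hG : IsBinaryTree G) (u v i j k h x : V)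
    (he : InteriorEdge G s(u, v)) (hd : Distinguishes G s(u, v) i j k h)
    (hli : G.degree i = 1) (hlj : G.degree j = 1) (hlk : G.degree k = 1) (hlh : G.degree h = 1)
    (hlx : G.degree x = 1) (hx : x ∉ ({i, j, k, h} : Finset V)) :
    (SameClass G u v x i → Distinguishes G s(u, v) x j k h) ∧
    (SameClass G u v x j → Distinguishes G s(u, v) i x k h) ∧
    (SameClass G u v x k → Distinguishes G s(u, v) i j x h) ∧
    (SameClass G u v x h → Distinguishes G s(u, v) i j k x) := by
  have htree : G.IsTree := hG.1
  have hu3 : G.degree u = 3 := he.2 u (Sym2.mem_mk_left u v)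
  have hv3 : G.degree v = 3 := he.2 v (Sym2.mem_mk_right u v)
  have hne : ∀ w : V, G.degree w = 1 → w ≠ u ∧ w ≠ v := by
    intro w hw
    constructor <;> rintro rfl <;> omega
  refine ⟨fun hsc => ?_, fun hsc => ?_, fun hsc => ?_, fun hsc => ?_⟩
  · exact QuartetAux.main htree hd (hne i hli).1 (hne i hli).2 hsc
  · exact QuartetAux.dist_swap12
      (QuartetAux.main htree (QuartetAux.dist_swap12 hd) (hne j hlj).1 (hne j hlj).2 hsc)
  · exact QuartetAux.dist_pairs
      (QuartetAux.main htree (QuartetAux.dist_pairs hd) (hne k hlk).1 (hne k hlk).2 hsc)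
  · exact QuartetAux.dist_pairs (QuartetAux.dist_swap12
      (QuartetAux.main htree (QuartetAux.dist_swap12 (QuartetAux.dist_pairs hd))
        (hne h hlh).1 (hne h hlh).2 hsc))
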